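/- arXiv:2203.05258 — 4 statements merged into one kernel-verified Lean document; each statement's English description precedes it below -/
import Mathlib

section
/- If an affine map s_j : Ω → cone(Ω) on a convex set Ω satisfies that s_j(ρ) is proportional to a pure (extreme) state of Ω for every ρ ∈ Ω, then the normalized output state is constant: there exists a pure state σ_j such that s_j(ρ) = e_j(ρ)·σ_j where e_j(ρ) is the normalization weight, for all ρ with e_j(ρ) > 0 on the relevant set (assuming the weight map e_j is affine and the output is nonzero on a convex set of inputs). -/
open scoped BigOperators

/-- if an affine map sends every state to a multiple (with affine
weight `e`) of some extreme point of the convex set `Ω`, and the weight is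
strictly positive on `Ω`, then the normalized output state is constant: a single
extreme point `σ` works for all inputs. -/
theorem pure_output_direction_constant
    {V : Type} [AddCommGroup V] [Module ℝ V]
    (Ω : Set V) (hconv : Convex ℝ Ω) (hne : Ω.Nonempty)
    (s : V →ᵃ[ℝ] V) (e : V →ᵃ[ℝ] ℝ)
    (hpos : ∀ ρ ∈ Ω, 0 < e ρ)
    (hpure : ∀ ρ ∈ Ω, ∃ σ ∈ Set.extremePoints ℝ Ω, s ρ = e ρ • σ) :
    ∃ σ ∈ Set.extremePoints ℝ Ω, ∀ ρ ∈ Ω, s ρ = e ρ • σ := by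
  obtain ⟨ρ₀, hρ₀⟩ := hne
  obtain ⟨σ₀, hσ₀, hs₀⟩ := hpure ρ₀ hρ₀
  refine ⟨σ₀, hσ₀, fun ρ hρ => ?_⟩
  obtain ⟨σ, hσ, hs⟩ := hpure ρ hρ
  suffices h : σ = σ₀ by rw [hs, h]
  set m := (1/2 : ℝ) • ρ + (1/2 : ℝ) • ρ₀ with hm
  have hab : (1/2 : ℝ) + 1/2 = 1 := by norm_num
  have hmΩ : m ∈ Ω := hconv hρ hρ₀ (by norm_num) (by norm_num) hab
  obtain ⟨σm, hσm, hsm⟩ := hpure m hmΩ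
  have hsm' : s m = ((1/2 : ℝ) * e ρ) • σ + ((1/2 : ℝ) * e ρ₀) • σ₀ := by
    rw [hm, Convex.combo_affine_apply hab, hs, hs₀, smul_smul, smul_smul]
  have hem : e m = (1/2 : ℝ) * e ρ + (1/2 : ℝ) * e ρ₀ := by
    rw [hm, Convex.combo_affine_apply hab, smul_eq_mul, smul_eq_mul]
  have hemp : 0 < e m := hpos m hmΩ
  have heρ : 0 < e ρ := hpos ρ hρ
  have heρ₀ : 0 < e ρ₀ := hpos ρ₀ hρ₀
  have key : ((1/2 : ℝ) * e ρ / e m) • σ + ((1/2 : ℝ) * e ρ₀ / e m) • σ₀ = σm := by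
    have h1 : (e m)⁻¹ • s m = σm := by
      rw [hsm, smul_smul, inv_mul_cancel₀ hemp.ne', one_smul]
    rw [← h1, hsm', smul_add, smul_smul, smul_smul]
    ring_nf
  have hmem : σm ∈ openSegment ℝ σ σ₀ :=
    ⟨(1/2 : ℝ) * e ρ / e m, (1/2 : ℝ) * e ρ₀ / e m,
      by positivity, by positivity,
      by rw [← add_div, ← hem, div_self hemp.ne'], key⟩
  have h1 := hσm.2 hσ.1 hσ₀.1 hmem
  have h2 := hσm.2 hσ₀.1 hσ.1 (by rwa [openSegment_symm] at hmem)
  rw [h1, h2]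
end

section
/- The affine functionals e₁(ρ) = Tr(E₁ρ) and e₂(ρ) = Tr(E₂ρ), with E₁ = (1/2)[[2,0,0,−1],[0,0,−1,0],[0,−1,0,0],[−1,0,0,2]] and E₂ = (1/2)[[0,0,0,1],[0,2,1,0],[0,1,2,0],[1,0,0,0]], satisfy E₁ + E₂ = I, are nonnegative on every separable state (i.e., Tr(E_i (p⊗q)) ≥ 0 for all 2×2 pure states p, q), and perfectly discriminate ρ₁ = |0⟩⟨0|⊗|0⟩⟨0| and ρ₂ = |+⟩⟨+|⊗|+⟩⟨+|: e₁(ρ₁) = 1, e₁(ρ₂) = 0, e₂(ρ₁) = 0, e₂(ρ₂) = 1. -/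
open scoped BigOperators
open Kronecker Matrix

/-- Encoding of the two-qubit pair index into `Fin 4`, following the ordering
`|00⟩, |01⟩, |10⟩, |11⟩`. -/
def idx : Fin 2 × Fin 2 → Fin 4 := fun p => ⟨2 * p.1.val + p.2.val, by omega⟩

/-- View a `4 × 4` matrix as a matrix on `C² ⊗ C²` in the basis `|00⟩,|01⟩,|10⟩,|11⟩`. -/
def toPair (M : Matrix (Fin 4) (Fin 4) ℂ) :
    Matrix (Fin 2 × Fin 2) (Fin 2 × Fin 2) ℂ :=
  Matrix.of fun p q => M (idx p) (idx q)

/-- A pure quantum state: a rank-one (Hermitian, idempotent, trace-one) projection. -/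
def IsPure {n : ℕ} (p : Matrix (Fin n) (Fin n) ℂ) : Prop :=
  p.IsHermitian ∧ p * p = p ∧ p.trace = 1

noncomputable def E1 : Matrix (Fin 2 × Fin 2) (Fin 2 × Fin 2) ℂ :=
  toPair ((1/2 : ℂ) • !![2, 0, 0, -1; 0, 0, -1, 0; 0, -1, 0, 0; -1, 0, 0, 2])

noncomputable def E2 : Matrix (Fin 2 × Fin 2) (Fin 2 × Fin 2) ℂ :=
  toPair ((1/2 : ℂ) • !![0, 0, 0, 1; 0, 2, 1, 0; 0, 1, 2, 0; 1, 0, 0, 0])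

noncomputable def P0 : Matrix (Fin 2) (Fin 2) ℂ := !![1, 0; 0, 0]
noncomputable def Pplus : Matrix (Fin 2) (Fin 2) ℂ := (1/2 : ℂ) • !![1, 1; 1, 1]

lemma trace_E1 (ρ : Matrix (Fin 2 × Fin 2) (Fin 2 × Fin 2) ℂ) :
    (E1 * ρ).trace = ρ (0,0) (0,0) + ρ (1,1) (1,1)
      - (ρ (1,1) (0,0) + ρ (1,0) (0,1) + ρ (0,1) (1,0) + ρ (0,0) (1,1))/2 := by
  simp [Matrix.trace, Matrix.mul_apply, Fintype.sum_prod_type, Fin.sum_univ_two,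
    E1, toPair, idx, Matrix.diag]
  norm_num [Matrix.cons_val_zero, Matrix.cons_val_one, Matrix.head_cons,
    Matrix.vecHead, Matrix.vecTail]
  ring

lemma trace_E2 (ρ : Matrix (Fin 2 × Fin 2) (Fin 2 × Fin 2) ℂ) :
    (E2 * ρ).trace = ρ (0,1) (0,1) + ρ (1,0) (1,0)
      + (ρ (1,1) (0,0) + ρ (1,0) (0,1) + ρ (0,1) (1,0) + ρ (0,0) (1,1))/2 := by
  simp [Matrix.trace, Matrix.mul_apply, Fintype.sum_prod_type, Fin.sum_univ_two,
    E2, toPair, idx, Matrix.diag]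
  norm_num [Matrix.cons_val_zero, Matrix.cons_val_one, Matrix.head_cons,
    Matrix.vecHead, Matrix.vecTail]
  ring

lemma pure_decomp (p : Matrix (Fin 2) (Fin 2) ℂ) (hp : IsPure p) :
    ∃ a : ℝ, p 0 0 = (a : ℂ) ∧ p 1 1 = 1 - (a : ℂ) ∧
      p 1 0 = starRingEnd ℂ (p 0 1) ∧ ((p 0 1).re)^2 ≤ a * (1 - a) := by
  obtain ⟨hherm, hidem, htr⟩ := hp
  have h00 : p 0 0 = starRingEnd ℂ (p 0 0) := (hherm.apply 0 0).symm
  have h10 : p 1 0 = starRingEnd ℂ (p 0 1) := (hherm.apply 1 0).symm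
  refine ⟨(p 0 0).re, ?_, ?_, h10, ?_⟩
  · exact (Complex.conj_eq_iff_re.mp h00.symm).symm
  · have htr' : p 0 0 + p 1 1 = 1 := by
      simpa [Matrix.trace, Fin.sum_univ_two, Matrix.diag] using htr
    have := (Complex.conj_eq_iff_re.mp h00.symm).symm
    rw [← this]; linear_combination htr'
  · have hid : p 0 0 * p 0 0 + p 0 1 * p 1 0 = p 0 0 := by
      have := congrFun (congrFun hidem 0) 0
      simpa [Matrix.mul_apply, Fin.sum_univ_two] using this
    have hre : p 0 0 = ((p 0 0).re : ℂ) := (Complex.conj_eq_iff_re.mp h00.symm).symm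
    have hns : (Complex.normSq (p 0 1) : ℂ) =
        ((p 0 0).re * (1 - (p 0 0).re) : ℝ) := by
      rw [← Complex.mul_conj, ← h10]
      push_cast
      linear_combination hid + (1 - p 0 0 - ((p 0 0).re : ℂ)) * hre
    have hns' : Complex.normSq (p 0 1) = (p 0 0).re * (1 - (p 0 0).re) :=
      Complex.ofReal_inj.mp hns
    have : ((p 0 1).re)^2 ≤ Complex.normSq (p 0 1) := by
      rw [Complex.normSq_apply]; nlinarith [sq_nonneg (p 0 1).im]
    linarith [this, hns'.le, hns'.ge]

lemma key_ineq (a c x y : ℝ) (hx : x^2 ≤ a * (1-a)) (hy : y^2 ≤ c * (1-c)) :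
    0 ≤ a*c + (1-a)*(1-c) - 2*x*y := by
  have ha : 0 ≤ a * (1-a) := le_trans (sq_nonneg x) hx
  have hc : 0 ≤ c * (1-c) := le_trans (sq_nonneg y) hy
  have ha0 : 0 ≤ a := by nlinarith
  have ha1 : a ≤ 1 := by nlinarith
  have hc0 : 0 ≤ c := by nlinarith
  have hc1 : c ≤ 1 := by nlinarith
  have hprod : x^2 * y^2 ≤ (a*(1-a)) * (c*(1-c)) :=
    mul_le_mul hx hy (sq_nonneg y) ha
  nlinarith [sq_nonneg (a*c - (1-a)*(1-c)), sq_nonneg (x*y),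
    mul_nonneg (mul_nonneg ha0 hc0) (mul_nonneg (by linarith : (0:ℝ) ≤ 1-a) (by linarith : (0:ℝ) ≤ 1-c)),
    sq_nonneg (a*c + (1-a)*(1-c) - 2*x*y), sq_nonneg (a*c + (1-a)*(1-c) + 2*x*y)]

/-- the functionals `ρ ↦ Tr(E_i ρ)` form a measurement valid on all
separable states (`E₁ + E₂ = I`, nonnegative on every product pure state) that
perfectly discriminates `|0⟩⟨0|⊗|0⟩⟨0|` from `|+⟩⟨+|⊗|+⟩⟨+|`. -/
theorem sep_effects_discriminate :
    E1 + E2 = 1 ∧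
    (∀ p q : Matrix (Fin 2) (Fin 2) ℂ, IsPure p → IsPure q →
      (∃ r : ℝ, 0 ≤ r ∧ (E1 * (p ⊗ₖ q)).trace = (r : ℂ)) ∧
      (∃ r : ℝ, 0 ≤ r ∧ (E2 * (p ⊗ₖ q)).trace = (r : ℂ))) ∧
    (E1 * (P0 ⊗ₖ P0)).trace = 1 ∧ (E1 * (Pplus ⊗ₖ Pplus)).trace = 0 ∧
    (E2 * (P0 ⊗ₖ P0)).trace = 0 ∧ (E2 * (Pplus ⊗ₖ Pplus)).trace = 1 := by
  refine ⟨?_, ?_, ?_, ?_, ?_, ?_⟩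
  · ext ⟨i, j⟩ ⟨k, l⟩
    fin_cases i <;> fin_cases j <;> fin_cases k <;> fin_cases l <;>
      norm_num [E1, E2, toPair, idx, Matrix.one_apply] <;>
      rw [if_neg (by decide)]
  · intro p q hp hq
    obtain ⟨a, hp00, hp11, hp10, hpx⟩ := pure_decomp p hp
    obtain ⟨c, hq00, hq11, hq10, hqy⟩ := pure_decomp q hq
    set x := (p 0 1).re with hxdef
    set y := (q 0 1).re with hydef
    have hpc : p 0 1 + starRingEnd ℂ (p 0 1) = 2*(x : ℂ) := by
      rw [Complex.add_conj]; push_cast; ring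
    have hqc : q 0 1 + starRingEnd ℂ (q 0 1) = 2*(y : ℂ) := by
      rw [Complex.add_conj]; push_cast; ring
    constructor
    · refine ⟨a*c + (1-a)*(1-c) - 2*x*y, key_ineq a c x y hpx hqy, ?_⟩
      rw [trace_E1]
      simp only [Matrix.kroneckerMap_apply]
      rw [hp00, hp11, hq00, hq11, hp10, hq10]
      push_cast
      linear_combination (-(1:ℂ)/2) * (q 0 1 + starRingEnd ℂ (q 0 1)) * hpc
        - (x:ℂ) * hqc
    · refine ⟨a*(1-c) + (1-a)*(1-(1-c)) - 2*x*(-y),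
        key_ineq a (1-c) x (-y) hpx (by nlinarith [hqy]), ?_⟩
      rw [trace_E2]
      simp only [Matrix.kroneckerMap_apply]
      rw [hp00, hp11, hq00, hq11, hp10, hq10]
      push_cast
      linear_combination ((1:ℂ)/2) * (q 0 1 + starRingEnd ℂ (q 0 1)) * hpc
        + (x:ℂ) * hqc
  · rw [trace_E1]; norm_num [P0, Matrix.kroneckerMap_apply]
  · rw [trace_E1]; norm_num [Pplus, Matrix.kroneckerMap_apply]
  · rw [trace_E2]; norm_num [P0, Matrix.kroneckerMap_apply]
  · rw [trace_E2]; norm_num [Pplus, Matrix.kroneckerMap_apply]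
end

section
/- Groenewold–Ozawa information gain is monotone under Groenewold majorization: let Ω be a state space with an entropy function H defined (and uniquely valued) on states, and suppose H is concave. For a state ρ and instrument s = {s_j} with outcome probabilities e_j(ρ) = u(s_j(ρ)), define I_G(ρ, s) = H(ρ) − Σ_j e_j(ρ) H(s_j(ρ)/e_j(ρ)). Then for any two instruments s, t, the relation t ≻_ρ s implies I_G(ρ, t) ≥ I_G(ρ, s). -/
open scoped BigOperators

/-- Membership in the cone generated by the state space `Ω`. -/
def InCone {V : Type} [AddCommGroup V] [Module ℝ V] (Ω : Set V) (x : V) : Prop :=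
  ∃ c : ℝ, 0 ≤ c ∧ ∃ σ ∈ Ω, x = c • σ

/-- An instrument: a finite family of affine maps into the cone over `Ω`,
with total weight (normalization) one on every state. -/
def IsInstrument {V : Type} [AddCommGroup V] [Module ℝ V] (Ω : Set V) (u : V →ₗ[ℝ] ℝ)
    {J : Type} [Fintype J] (s : J → V →ᵃ[ℝ] V) : Prop :=
  ∀ ρ ∈ Ω, (∀ j, InCone Ω (s j ρ)) ∧ ∑ j, u (s j ρ) = 1

/-- Groenewold majorization at the state `ρ`: `t ≻_ρ s` iff `s`'s outputs at `ρ`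
are a stochastic post-processing of `t`'s outputs at `ρ`. -/
def Maj {V : Type} [AddCommGroup V] [Module ℝ V] (ρ : V)
    {J K : Type} [Fintype J] [Fintype K]
    (t : K → V →ᵃ[ℝ] V) (s : J → V →ᵃ[ℝ] V) : Prop :=
  ∃ p : J → K → ℝ, (∀ j k, 0 ≤ p j k) ∧ (∀ k, ∑ j, p j k = 1) ∧
    ∀ j, s j ρ = ∑ k, p j k • t k ρ

/-- A fine-grained instrument: for every state `ρ`, any instrument that
Groenewold-majorizes it at `ρ` is also majorized by it at `ρ`. -/
def FineGrained {V : Type} [AddCommGroup V] [Module ℝ V] (Ω : Set V) (u : V →ₗ[ℝ] ℝ)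
    {J : Type} [Fintype J] (s : J → V →ᵃ[ℝ] V) : Prop :=
  ∀ ρ ∈ Ω, ∀ (K : Type) (_ : Fintype K), ∀ t : K → V →ᵃ[ℝ] V,
    IsInstrument Ω u t → Maj ρ t s → Maj ρ s t

/-- The Groenewold–Ozawa information gain of the instrument `s` on the state `ρ`,
relative to the entropy function `H` (terms with zero outcome probability vanish). -/
noncomputable def IG {V : Type} [AddCommGroup V] [Module ℝ V]
    (H : V → ℝ) (u : V →ₗ[ℝ] ℝ) {J : Type} [Fintype J]
    (s : J → V →ᵃ[ℝ] V) (ρ : V) : ℝ :=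
  H ρ - ∑ j, u (s j ρ) * H ((u (s j ρ))⁻¹ • s j ρ)

/-- for any concave entropy function `H` on the state space, the
Groenewold–Ozawa information gain is monotone under Groenewold majorization:
`t ≻_ρ s` implies `I_G(ρ,t) ≥ I_G(ρ,s)`. -/
theorem information_gain_monotone
    {V : Type} [AddCommGroup V] [Module ℝ V]
    (Ω : Set V) (hconv : Convex ℝ Ω)
    (u : V →ₗ[ℝ] ℝ) (hu : ∀ σ ∈ Ω, u σ = 1)
    (H : V → ℝ) (hH : ConcaveOn ℝ Ω H)
    {J K : Type} [Fintype J] [Fintype K]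
    (s : J → V →ᵃ[ℝ] V) (t : K → V →ᵃ[ℝ] V)
    (hs : IsInstrument Ω u s) (ht : IsInstrument Ω u t)
    (ρ : V) (hρ : ρ ∈ Ω) (hmaj : Maj ρ t s) :
    IG H u s ρ ≤ IG H u t ρ := by
  obtain ⟨p, hp0, hp1, hps⟩ := hmaj
  -- decompose the outputs of t as weight • state
  have hcone := fun k => (ht ρ hρ).1 k
  choose c hc0 τ hτΩ hτ using hcone
  set f : K → ℝ := fun k => u (t k ρ) with hf
  have hfc : ∀ k, f k = c k := by
    intro k
    simp [hf, hτ k, map_smul, hu _ (hτΩ k)]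
  have hf0 : ∀ k, 0 ≤ f k := fun k => (hfc k) ▸ hc0 k
  have htτ : ∀ k, t k ρ = f k • τ k := by
    intro k; rw [hfc]; exact hτ k
  -- outcome probabilities of s
  set e : J → ℝ := fun j => u (s j ρ) with he
  have hej : ∀ j, e j = ∑ k, p j k * f k := by
    intro j
    simp only [he, hps j, map_sum, map_smul, smul_eq_mul, hf]
  have he0 : ∀ j, 0 ≤ e j := by
    intro j; rw [hej]
    exact Finset.sum_nonneg fun k _ => mul_nonneg (hp0 j k) (hf0 k)
  -- rewrite s j ρ in terms of the states τ k
  have hsτ : ∀ j, s j ρ = ∑ k, (p j k * f k) • τ k := by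
    intro j
    rw [hps j]
    exact Finset.sum_congr rfl fun k _ => by rw [htτ k, smul_smul]
  -- the right-hand sum equals ∑ f k * H (τ k)
  have hRHS : ∑ k, u (t k ρ) * H ((u (t k ρ))⁻¹ • t k ρ) = ∑ k, f k * H (τ k) := by
    refine Finset.sum_congr rfl fun k _ => ?_
    rcases eq_or_lt_of_le (hf0 k) with h0 | hpos
    · rw [show u (t k ρ) = f k from rfl, ← h0, zero_mul, zero_mul]
    · rw [show u (t k ρ) = f k from rfl, htτ k, smul_smul,
        inv_mul_cancel₀ (ne_of_gt hpos), one_smul]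
  -- key per-j inequality
  have key : ∀ j, ∑ k, p j k * f k * H (τ k) ≤ e j * H ((e j)⁻¹ • s j ρ) := by
    intro j
    rcases eq_or_lt_of_le (he0 j) with h0 | hpos
    · have hz : ∀ k ∈ Finset.univ, p j k * f k = 0 := by
        rw [← Finset.sum_eq_zero_iff_of_nonneg
          (fun k _ => mul_nonneg (hp0 j k) (hf0 k))]
        rw [← hej j, ← h0]
      rw [← h0]
      simp only [zero_mul]
      apply le_of_eq
      refine Finset.sum_eq_zero fun k _ => by rw [hz k (Finset.mem_univ k), zero_mul]
    · have hw0 : ∀ k ∈ Finset.univ, (0:ℝ) ≤ (e j)⁻¹ * (p j k * f k) :=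
        fun k _ => mul_nonneg (inv_nonneg.2 (he0 j)) (mul_nonneg (hp0 j k) (hf0 k))
      have hw1 : ∑ k, (e j)⁻¹ * (p j k * f k) = 1 := by
        rw [← Finset.mul_sum, ← hej j, inv_mul_cancel₀ (ne_of_gt hpos)]
      have hmem : ∀ k ∈ Finset.univ, τ k ∈ Ω := fun k _ => hτΩ k
      have hJensen := hH.le_map_sum hw0 hw1 hmem
      have hpt : ∑ k, ((e j)⁻¹ * (p j k * f k)) • τ k = (e j)⁻¹ • s j ρ := by
        rw [hsτ j, Finset.smul_sum]
        exact Finset.sum_congr rfl fun k _ => by rw [smul_smul]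
      rw [hpt] at hJensen
      calc ∑ k, p j k * f k * H (τ k)
          = e j * ∑ k, ((e j)⁻¹ * (p j k * f k)) • H (τ k) := by
            rw [Finset.mul_sum]
            refine Finset.sum_congr rfl fun k _ => ?_
            simp only [smul_eq_mul]
            field_simp
        _ ≤ e j * H ((e j)⁻¹ • s j ρ) :=
            mul_le_mul_of_nonneg_left hJensen (he0 j)
  -- combine
  have hsum : ∑ k, f k * H (τ k) ≤ ∑ j, e j * H ((e j)⁻¹ • s j ρ) := by
    calc ∑ k, f k * H (τ k) = ∑ k, (∑ j, p j k) * (f k * H (τ k)) := by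
          refine Finset.sum_congr rfl fun k _ => by rw [hp1 k, one_mul]
      _ = ∑ j, ∑ k, p j k * f k * H (τ k) := by
          rw [Finset.sum_comm]
          refine Finset.sum_congr rfl fun k _ => by rw [Finset.sum_mul]; exact Finset.sum_congr rfl fun j _ => by ring
      _ ≤ ∑ j, e j * H ((e j)⁻¹ • s j ρ) :=
          Finset.sum_le_sum fun j _ => key j
  unfold IG
  rw [hRHS]
  exact sub_le_sub_left hsum _
end

section
/- If a mixed element cannot majorize a pure one: let Ω be a convex set, ρ a state, and s = {s_j} an instrument such that some normalized output σ = s_{j₀}(ρ)/e_{j₀}(ρ) is not an extreme point of Ω. Construct the refinement t of s obtained by splitting s_{j₀} according to a nontrivial convex decomposition σ = Σ_l q_l σ_l into at least two distinct states. Then t ≻_ρ s but s ⊁_ρ t; hence s is not fine-grained. -/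
open scoped BigOperators

lemma extreme_combo {V : Type} [AddCommGroup V] [Module ℝ V] {Ω : Set V}
    (hconv : Convex ℝ Ω)
    {ι : Type} [Fintype ι] {w : ι → ℝ} {y : ι → V}
    (hw0 : ∀ i, 0 ≤ w i) (hw1 : ∑ i, w i = 1) (hy : ∀ i, y i ∈ Ω)
    {x : V} (hx : x ∈ Set.extremePoints ℝ Ω)
    (hsum : ∑ i, w i • y i = x) : ∀ i, 0 < w i → y i = x := by
  classical
  intro i hi
  have hrest : ∑ j ∈ Finset.univ.erase i, w j = 1 - w i := by
    have := Finset.add_sum_erase Finset.univ w (Finset.mem_univ i)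
    linarith
  have hrestv : ∑ j ∈ Finset.univ.erase i, w j • y j = x - w i • y i := by
    have h := Finset.add_sum_erase Finset.univ (fun j => w j • y j) (Finset.mem_univ i)
    rw [hsum] at h
    rw [← h]; abel
  rcases eq_or_lt_of_le (by
      have h0 : (0:ℝ) ≤ ∑ j ∈ Finset.univ.erase i, w j :=
        Finset.sum_nonneg fun j _ => hw0 j
      linarith : w i ≤ 1) with h1 | h1
  · have hz0 : ∑ j ∈ Finset.univ.erase i, w j • y j = 0 := by
      refine Finset.sum_eq_zero fun j hj => ?_
      have h0 : ∑ j ∈ Finset.univ.erase i, w j = 0 := by rw [hrest, ← h1]; ring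
      rw [(Finset.sum_eq_zero_iff_of_nonneg fun j _ => hw0 j).mp h0 j hj, zero_smul]
    rw [hz0] at hrestv
    have : x = w i • y i := by
      have := hrestv.symm
      rw [sub_eq_zero] at this
      exact this
    rw [this, h1, one_smul]
  · set r : ℝ := 1 - w i with hr
    have hr0 : 0 < r := by simp only [hr]; linarith
    set z : V := r⁻¹ • ∑ j ∈ Finset.univ.erase i, w j • y j with hz
    have hzΩ : z ∈ Ω := by
      have hmem := hconv.sum_mem (t := Finset.univ.erase i) (w := fun j => r⁻¹ * w j)
        (z := y) (fun j _ => mul_nonneg (le_of_lt (inv_pos.mpr hr0)) (hw0 j))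
        (by rw [← Finset.mul_sum, hrest]; exact inv_mul_cancel₀ (ne_of_gt hr0))
        (fun j _ => hy j)
      have heq : ∑ j ∈ Finset.univ.erase i, (r⁻¹ * w j) • y j = z := by
        rw [hz, Finset.smul_sum]
        exact Finset.sum_congr rfl fun j _ => by rw [mul_smul]
      rwa [heq] at hmem
    have hseg : x ∈ openSegment ℝ (y i) z := by
      refine ⟨w i, r, hi, hr0, by simp [hr], ?_⟩
      rw [hz, smul_inv_smul₀ (ne_of_gt hr0), hrestv]
      abel
    exact hx.2 (hy i) hzΩ hseg

lemma sum_subtype_ne {J : Type} [Fintype J] [DecidableEq J] (j₀ : J)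
    {M : Type} [AddCommMonoid M] (f : J → M) :
    ∑ j' : {j : J // j ≠ j₀}, f j'.1 = ∑ j ∈ Finset.univ.erase j₀, f j :=
  (Finset.sum_subtype _ (by simp) f).symm

set_option maxHeartbeats 1000000

/-- a mixed output obstructs fine-graining. If the `j₀`-th normalized
output `σ` of an instrument `s` at `ρ` is not extreme and admits a nontrivial convex
decomposition `σ = Σ_l q_l σ_l` into at least two distinct pure states, then the
refinement `t` of `s` obtained by splitting the `j₀`-th outcome accordingly satisfies
`t ≻_ρ s` but not `s ≻_ρ t`; hence `s` is not fine-grained. -/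
theorem mixed_output_not_fine_grained
    {V : Type} [AddCommGroup V] [Module ℝ V]
    (Ω : Set V) (hconv : Convex ℝ Ω)
    (u : V →ₗ[ℝ] ℝ) (hu : ∀ σ ∈ Ω, u σ = 1)
    {J : Type} [Fintype J] [DecidableEq J]
    (s : J → V →ᵃ[ℝ] V) (hs : IsInstrument Ω u s)
    (ρ : V) (hρ : ρ ∈ Ω) (j₀ : J) (he : 0 < u (s j₀ ρ))
    {L : Type} [Fintype L] (q : L → ℝ) (σl : L → V)
    (hq0 : ∀ l, 0 < q l) (hq1 : ∑ l, q l = 1)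
    (hσl : ∀ l, σl l ∈ Set.extremePoints ℝ Ω)
    (hinj : Function.Injective σl) (hcard : 1 < Fintype.card L)
    (hmixed : (u (s j₀ ρ))⁻¹ • s j₀ ρ ∉ Set.extremePoints ℝ Ω)
    (hdecomp : (u (s j₀ ρ))⁻¹ • s j₀ ρ = ∑ l, q l • σl l) :
    ∃ t : ({j : J // j ≠ j₀} ⊕ L) → V →ᵃ[ℝ] V,
      IsInstrument Ω u t ∧
      (∀ j : {j : J // j ≠ j₀}, t (Sum.inl j) = s j.1) ∧
      (∀ l : L, t (Sum.inr l) ρ = (u (s j₀ ρ) * q l) • σl l) ∧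
      Maj ρ t s ∧ ¬ Maj ρ s t ∧ ¬ FineGrained Ω u s := by
  classical
  have hσlΩ : ∀ l, σl l ∈ Ω := fun l => extremePoints_subset (hσl l)
  -- representations of s's outputs at ρ
  obtain ⟨hcone, hnorm⟩ := hs ρ hρ
  have hrep : ∀ j, ∃ τ ∈ Ω, s j ρ = (u (s j ρ)) • τ := by
    intro j
    obtain ⟨c, hc0, τ, hτ, hτeq⟩ := hcone j
    have hcu : u (s j ρ) = c := by rw [hτeq, map_smul, smul_eq_mul, hu τ hτ, mul_one]
    exact ⟨τ, hτ, by rw [hcu]; exact hτeq⟩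
  choose τ hτΩ hτeq using hrep
  have hc0 : ∀ j, 0 ≤ u (s j ρ) := by
    intro j
    obtain ⟨c, hc0, τ', hτ', hτeq'⟩ := hcone j
    rw [hτeq', map_smul, smul_eq_mul, hu τ' hτ', mul_one]
    exact hc0
  have hτj₀ : τ j₀ ∉ Set.extremePoints ℝ Ω := by
    have key : (u (s j₀ ρ))⁻¹ • s j₀ ρ = τ j₀ := by
      have h := congrArg (fun v => (u (s j₀ ρ))⁻¹ • v) (hτeq j₀)
      rw [inv_smul_smul₀ (ne_of_gt he)] at h
      exact h
    rwa [key] at hmixed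
  -- the refinement instrument
  set t : ({j : J // j ≠ j₀} ⊕ L) → V →ᵃ[ℝ] V := Sum.elim (fun j' => s j'.1)
    (fun l => (LinearMap.toSpanSingleton ℝ V (q l • σl l)).toAffineMap.comp
        (u.toAffineMap.comp (s j₀))) with ht
  have htl : ∀ j', t (Sum.inl j') = s j'.1 := fun _ => rfl
  have htr : ∀ l (x : V), t (Sum.inr l) x = (u (s j₀ x) * q l) • σl l := by
    intro l x
    show (LinearMap.toSpanSingleton ℝ V (q l • σl l)) (u (s j₀ x)) = _
    rw [LinearMap.toSpanSingleton_apply, smul_smul]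
  clear_value t
  -- instrument property
  have hex0 : ∀ x ∈ Ω, 0 ≤ u (s j₀ x) := by
    intro x hx
    obtain ⟨c, hcnn, τ', hτ', hτeq'⟩ := (hs x hx).1 j₀
    rw [hτeq', map_smul, smul_eq_mul, hu τ' hτ', mul_one]
    exact hcnn
  have htinst : IsInstrument Ω u t := by
    intro x hx
    obtain ⟨hconex, hnormx⟩ := hs x hx
    constructor
    · rintro (j' | l)
      · rw [htl]; exact hconex j'.1
      · exact ⟨u (s j₀ x) * q l, mul_nonneg (hex0 x hx) (hq0 l).le, σl l, hσlΩ l, htr l x⟩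
    · rw [Fintype.sum_sum_type]
      have h2 : ∀ l, u (t (Sum.inr l) x) = u (s j₀ x) * q l := by
        intro l
        rw [htr l x, map_smul, smul_eq_mul, hu _ (hσlΩ l), mul_one]
      have h1 : ∀ j', u (t (Sum.inl j') x) = u (s j'.1 x) := fun j' => by rw [htl]
      rw [Finset.sum_congr rfl (fun l _ => h2 l), Finset.sum_congr rfl (fun j' _ => h1 j'),
        ← Finset.mul_sum, hq1, mul_one, sum_subtype_ne j₀ (fun j => u (s j x)),
        Finset.sum_erase_add _ _ (Finset.mem_univ j₀)]
      exact hnormx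
  -- t majorizes s at ρ
  have hmaj : Maj ρ t s := by
    refine ⟨fun j k => Sum.elim (fun j' => if j = j'.1 then 1 else 0)
        (fun _ => if j = j₀ then 1 else 0) k, ?_, ?_, ?_⟩
    · rintro j (j' | l) <;> dsimp <;> split <;> norm_num
    · rintro (j' | l)
      · show ∑ j, (if j = j'.1 then (1:ℝ) else 0) = 1
        rw [Finset.sum_ite_eq' Finset.univ j'.1 (fun _ => (1:ℝ))]
        simp
      · show ∑ j, (if j = j₀ then (1:ℝ) else 0) = 1
        rw [Finset.sum_ite_eq' Finset.univ j₀ (fun _ => (1:ℝ))]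
        simp
    · intro j
      rw [Fintype.sum_sum_type]
      simp only [Sum.elim_inl, Sum.elim_inr]
      by_cases hj : j = j₀
      · have h1 : ∑ j' : {j : J // j ≠ j₀}, (if j = j'.1 then (1:ℝ) else 0) • t (Sum.inl j') ρ
            = 0 := by
          refine Finset.sum_eq_zero fun j' _ => ?_
          rw [if_neg (fun h => j'.2 (h.symm.trans hj)), zero_smul]
        have h2 : ∑ l, (if j = j₀ then (1:ℝ) else 0) • t (Sum.inr l) ρ = s j₀ ρ := by
          simp only [if_pos hj, one_smul]
          rw [Finset.sum_congr rfl (fun l _ => htr l ρ)]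
          have hstep : ∑ l, (u (s j₀ ρ) * q l) • σl l = u (s j₀ ρ) • ∑ l, q l • σl l := by
            rw [Finset.smul_sum]
            exact Finset.sum_congr rfl fun l _ => (mul_smul _ _ _)
          rw [hstep, ← hdecomp, smul_inv_smul₀ (ne_of_gt he)]
        rw [h1, h2, zero_add, hj]
      · have h2 : ∑ l, (if j = j₀ then (1:ℝ) else 0) • t (Sum.inr l) ρ = 0 := by
          refine Finset.sum_eq_zero fun l _ => ?_
          rw [if_neg hj, zero_smul]
        have h1 : ∑ j' : {j : J // j ≠ j₀}, (if j = j'.1 then (1:ℝ) else 0) • t (Sum.inl j') ρ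
            = s j ρ := by
          have hcond : ∀ j' : {j : J // j ≠ j₀}, (if j = j'.1 then (1:ℝ) else 0) • t (Sum.inl j') ρ
              = if j' = ⟨j, hj⟩ then s j'.1 ρ else 0 := by
            intro j'
            by_cases h : j = j'.1
            · rw [if_pos h, if_pos (Subtype.ext h.symm), one_smul, htl]
            · rw [if_neg h, if_neg (fun hh => h (by rw [hh])), zero_smul]
          rw [Finset.sum_congr rfl (fun j' _ => hcond j'),
            Finset.sum_ite_eq' Finset.univ ((⟨j, hj⟩ : {j : J // j ≠ j₀}))
              (fun j' => s j'.1 ρ)]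
          simp
        rw [h1, h2, add_zero]
  -- s does not majorize t at ρ
  have hnmaj : ¬ Maj ρ s t := by
    rintro ⟨p, hp0, hpc, hpe⟩
    have hLne : Nonempty L := Fintype.card_pos_iff.mp (by omega)
    obtain ⟨l₀⟩ := hLne
    -- rows as convex combinations of the τ j
    have hrow : ∀ k, t k ρ = ∑ j, (p k j * u (s j ρ)) • τ j := by
      intro k
      rw [hpe k]
      refine Finset.sum_congr rfl fun j _ => ?_
      conv_lhs => rw [hτeq j]
      rw [smul_smul]
    have humass : ∀ k, u (t k ρ) = ∑ j, p k j * u (s j ρ) := by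
      intro k
      rw [hrow k, map_sum]
      refine Finset.sum_congr rfl fun j _ => ?_
      rw [map_smul, smul_eq_mul, hu _ (hτΩ j), mul_one]
    have hpc0 : ∀ k j, 0 ≤ p k j * u (s j ρ) := fun k j => mul_nonneg (hp0 k j) (hc0 j)
    -- rigidity of rows with extreme normalized output
    have hrigid : ∀ k (x : V), x ∈ Set.extremePoints ℝ Ω → t k ρ = u (t k ρ) • x →
        0 < u (t k ρ) → ∀ j, 0 < p k j * u (s j ρ) → τ j = x := by
      intro k x hxe hkx hk j hj
      have hm := humass k
      have hnorm2 : (u (t k ρ))⁻¹ • t k ρ = x := by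
        have h := congrArg (fun v => (u (t k ρ))⁻¹ • v) hkx
        rw [inv_smul_smul₀ (ne_of_gt hk)] at h
        exact h
      have hsum : ∑ j, ((u (t k ρ))⁻¹ * (p k j * u (s j ρ))) • τ j = x := by
        have hexp : ∑ j, ((u (t k ρ))⁻¹ * (p k j * u (s j ρ))) • τ j
            = (u (t k ρ))⁻¹ • ∑ j, (p k j * u (s j ρ)) • τ j := by
          rw [Finset.smul_sum]
          exact Finset.sum_congr rfl fun j _ => (mul_smul _ _ _)
        rw [hexp, ← hrow k, hnorm2]
      exact extreme_combo hconv
        (w := fun j => (u (t k ρ))⁻¹ * (p k j * u (s j ρ))) (y := τ)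
        (fun j => mul_nonneg (inv_nonneg.mpr hk.le) (hpc0 k j))
        (by rw [← Finset.mul_sum, ← hm, inv_mul_cancel₀ (ne_of_gt hk)])
        hτΩ hxe hsum j (mul_pos (inv_pos.mpr hk) hj)
    -- the set of columns whose normalized output is σl l₀
    set F : Finset J := Finset.univ.filter (fun j => 0 < u (s j ρ) ∧ τ j = σl l₀) with hF
    have hj₀F : j₀ ∉ F := by
      rw [hF, Finset.mem_filter]
      rintro ⟨-, ⟨-, h⟩⟩
      exact hτj₀ (h ▸ hσl l₀)
    have hMnn : ∀ k, 0 ≤ ∑ j ∈ F, p k j * u (s j ρ) :=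
      fun k => Finset.sum_nonneg fun j _ => hpc0 k j
    -- rigid rows draw all their mass from F
    have hfull : ∀ k, t k ρ = u (t k ρ) • σl l₀ →
        0 < u (t k ρ) → ∑ j ∈ F, p k j * u (s j ρ) = u (t k ρ) := by
      intro k hkx hk
      rw [humass k]
      refine Finset.sum_subset (Finset.subset_univ F) ?_
      intro j _ hjF
      by_contra hne
      have hpos : 0 < p k j * u (s j ρ) := lt_of_le_of_ne (hpc0 k j) (Ne.symm hne)
      have hcj : 0 < u (s j ρ) := by
        rcases lt_or_eq_of_le (hc0 j) with h | h
        · exact h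
        · rw [← h, mul_zero] at hpos; exact absurd hpos (lt_irrefl 0)
      have hτx := hrigid k (σl l₀) (hσl l₀) hkx hk j hpos
      exact hjF (by rw [hF, Finset.mem_filter]; exact ⟨Finset.mem_univ j, hcj, hτx⟩)
    -- mass in row (inr l₀)
    have hmr : u (t (Sum.inr l₀) ρ) = u (s j₀ ρ) * q l₀ := by
      rw [htr l₀ ρ, map_smul, smul_eq_mul, hu _ (hσlΩ l₀), mul_one]
    have hmrpos : 0 < u (t (Sum.inr l₀) ρ) := by rw [hmr]; exact mul_pos he (hq0 l₀)
    have hr0 : ∑ j ∈ F, p (Sum.inr l₀) j * u (s j ρ) = u (s j₀ ρ) * q l₀ := by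
      rw [← hmr]
      exact hfull (Sum.inr l₀) (by rw [hmr, htr l₀ ρ]) hmrpos
    -- mass in rows (inl j') for j'.1 ∈ F
    have hrF : ∀ j' : {j : J // j ≠ j₀}, j'.1 ∈ F →
        ∑ j ∈ F, p (Sum.inl j') j * u (s j ρ) = u (s j'.1 ρ) := by
      intro j' hj'
      rw [hF, Finset.mem_filter] at hj'
      obtain ⟨-, hcpos, hτ'⟩ := hj'
      have huml : u (t (Sum.inl j') ρ) = u (s j'.1 ρ) := by rw [htl]
      have hteq : t (Sum.inl j') ρ = u (t (Sum.inl j') ρ) • σl l₀ := by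
        rw [huml, htl]
        conv_lhs => rw [hτeq j'.1]
        rw [hτ']
      have hupos : 0 < u (t (Sum.inl j') ρ) := by rw [huml]; exact hcpos
      rw [hfull (Sum.inl j') hteq hupos, huml]
    -- total mass bookkeeping
    have htot : ∑ k, ∑ j ∈ F, p k j * u (s j ρ) = ∑ j ∈ F, u (s j ρ) := by
      rw [Finset.sum_comm]
      refine Finset.sum_congr rfl fun j _ => ?_
      rw [← Finset.sum_mul, hpc j, one_mul]
    have hsplit : ∑ k, ∑ j ∈ F, p k j * u (s j ρ)
        = (∑ j' : {j : J // j ≠ j₀}, ∑ j ∈ F, p (Sum.inl j') j * u (s j ρ))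
          + ∑ l, ∑ j ∈ F, p (Sum.inr l) j * u (s j ρ) :=
      Fintype.sum_sum_type _
    have hge1 : u (s j₀ ρ) * q l₀ ≤ ∑ l, ∑ j ∈ F, p (Sum.inr l) j * u (s j ρ) := by
      rw [← hr0]
      exact Finset.single_le_sum (fun l _ => hMnn (Sum.inr l)) (Finset.mem_univ l₀)
    have hge2 : ∑ j ∈ F, u (s j ρ)
        ≤ ∑ j' : {j : J // j ≠ j₀}, ∑ j ∈ F, p (Sum.inl j') j * u (s j ρ) := by
      have hstep : ∀ j' : {j : J // j ≠ j₀},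
          (if j'.1 ∈ F then u (s j'.1 ρ) else 0) ≤ ∑ j ∈ F, p (Sum.inl j') j * u (s j ρ) := by
        intro j'
        by_cases h : j'.1 ∈ F
        · rw [if_pos h, ← hrF j' h]
        · rw [if_neg h]; exact hMnn (Sum.inl j')
      have hchain : ∑ j' : {j : J // j ≠ j₀}, (if j'.1 ∈ F then u (s j'.1 ρ) else 0)
          = ∑ j ∈ F, u (s j ρ) := by
        rw [sum_subtype_ne j₀ (fun j => if j ∈ F then u (s j ρ) else 0)]
        have h2 : ∑ j ∈ F, u (s j ρ) = ∑ j : J, (if j ∈ F then u (s j ρ) else 0) := by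
          rw [Finset.sum_ite_mem, Finset.univ_inter]
        rw [h2, ← Finset.sum_erase_add Finset.univ _ (Finset.mem_univ j₀), if_neg hj₀F,
          add_zero]
      rw [← hchain]
      exact Finset.sum_le_sum fun j' _ => hstep j'
    have hcontra : u (s j₀ ρ) * q l₀ ≤ 0 := by
      have hh := htot
      rw [hsplit] at hh
      linarith
    exact absurd hcontra (not_le.mpr (mul_pos he (hq0 l₀)))
  exact ⟨t, htinst, htl, fun l => htr l ρ, hmaj, hnmaj,
    fun hfg => hnmaj (hfg ρ hρ _ inferInstance t htinst hmaj)⟩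
end
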